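/- For γ ∈ ℝ, let H⁽³⁾(γ) be the 3×3 complex matrix [[−2iγ, √2, 0],[√2, 0, √2],[0, √2, 2iγ]] (the non-Hermitian Bose-Hubbard Hamiltonian for two bosons with c = 0, v = 1). Then det(λI − H⁽³⁾(γ)) = λ(λ² − 4(1 − γ²)); in particular, for |γ| ≤ 1 the eigenvalues of H⁽³⁾(γ) are E_0 = 0 and E_± = ±2√(1 − γ²), and at the exceptional points γ = ±1 one has H⁽³⁾(γ)³ = 0 while H⁽³⁾(γ)² ≠ 0, i.e. H⁽³⁾(±1) has an exceptional-point degeneracy of the maximal order three. -/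

import Mathlib

open Matrix

set_option maxHeartbeats 1000000

/-- The non-Hermitian Bose-Hubbard Hamiltonian
`H⁽³⁾(γ) = [[-2iγ, √2, 0], [√2, 0, √2], [0, √2, 2iγ]]` (two bosons, `c = 0`, `v = 1`). -/
noncomputable def bh3 (γ : ℝ) : Matrix (Fin 3) (Fin 3) ℂ :=
  !![-(2 * Complex.I * (γ : ℂ)), ((Real.sqrt 2 : ℝ) : ℂ), 0;
     ((Real.sqrt 2 : ℝ) : ℂ), 0, ((Real.sqrt 2 : ℝ) : ℂ);
     0, ((Real.sqrt 2 : ℝ) : ℂ), 2 * Complex.I * (γ : ℂ)]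

lemma bh3_s2 : ((Real.sqrt 2 : ℝ) : ℂ) * ((Real.sqrt 2 : ℝ) : ℂ) = 2 := by
  rw [← Complex.ofReal_mul, Real.mul_self_sqrt (by norm_num)]; norm_num

lemma bh3_det_key (γ : ℝ) (l : ℂ) : (l • (1 : Matrix (Fin 3) (Fin 3) ℂ) - bh3 γ).det =
    l * (l ^ 2 - 4 * (1 - (γ : ℂ) ^ 2)) := by
  simp [bh3, det_fin_three, Matrix.smul_apply, Matrix.one_apply]
  linear_combination (-2*l) * bh3_s2 + (-4*(γ:ℂ)^2*l) * Complex.I_sq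

lemma bh3_det_shift (γ : ℝ) (c : ℂ) :
    (bh3 γ - c • (1 : Matrix (Fin 3) (Fin 3) ℂ)).det =
    - (c * (c ^ 2 - 4 * (1 - (γ : ℂ) ^ 2))) := by
  rw [(neg_sub (c • (1 : Matrix (Fin 3) (Fin 3) ℂ)) (bh3 γ)).symm, det_neg, bh3_det_key]
  simp [Fintype.card_fin]
  ring

lemma bh3_cube (γ : ℝ) (h : γ = 1 ∨ γ = -1) : bh3 γ ^ 3 = 0 ∧ bh3 γ ^ 2 ≠ 0 := by
  constructor
  · rcases h with h | h <;> subst h <;>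
    · ext i j
      fin_cases i <;> fin_cases j <;>
        simp [pow_succ, bh3, Matrix.mul_apply, Fin.sum_univ_three, Matrix.one_apply] <;>
        simp [mul_assoc, mul_comm, mul_left_comm, bh3_s2, Complex.I_mul_I] <;>
        first
          | linear_combination (-8*Complex.I) * Complex.I_sq
          | linear_combination (8*Complex.I) * Complex.I_sq
          | linear_combination (4*((Real.sqrt 2 : ℝ):ℂ)) * Complex.I_sq
  · intro hc
    rw [pow_two] at hc
    have h00 := congrFun (congrFun hc 0) 0
    rcases h with h | h <;> subst h <;>
      simp [bh3, Matrix.mul_apply, Fin.sum_univ_three, bh3_s2] at h00 <;>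
      exact absurd (by linear_combination h00 - 4 * Complex.I_sq : (-2 : ℂ) = 0)
        (by norm_num)

/-- the characteristic polynomial of `H⁽³⁾(γ)` is `λ(λ² - 4(1 - γ²))`;
for `|γ| ≤ 1` the eigenvalues are `0` and `±2√(1 - γ²)`, and at the exceptional points
`γ = ±1` one has `H⁽³⁾(γ)³ = 0` and `H⁽³⁾(γ)² ≠ 0` (a maximal-order, order-three,
exceptional-point degeneracy). -/
theorem bh3_spectrum_and_exceptional_points (γ : ℝ) :
    (∀ l : ℂ, (l • (1 : Matrix (Fin 3) (Fin 3) ℂ) - bh3 γ).det =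
      l * (l ^ 2 - 4 * (1 - (γ : ℂ) ^ 2))) ∧
    (|γ| ≤ 1 →
      (bh3 γ - (0 : ℂ) • (1 : Matrix (Fin 3) (Fin 3) ℂ)).det = 0 ∧
      (bh3 γ - ((2 * Real.sqrt (1 - γ ^ 2) : ℝ) : ℂ) •
        (1 : Matrix (Fin 3) (Fin 3) ℂ)).det = 0 ∧
      (bh3 γ - ((-(2 * Real.sqrt (1 - γ ^ 2)) : ℝ) : ℂ) •
        (1 : Matrix (Fin 3) (Fin 3) ℂ)).det = 0) ∧
    ((γ = 1 ∨ γ = -1) → bh3 γ ^ 3 = 0 ∧ bh3 γ ^ 2 ≠ 0) := by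
  refine ⟨bh3_det_key γ, ?_, bh3_cube γ⟩
  intro hγ
  have hnonneg : (0 : ℝ) ≤ 1 - γ ^ 2 := by
    nlinarith [abs_nonneg γ, sq_abs γ, sq_nonneg (1 - |γ|)]
  have hsq : ((2 * Real.sqrt (1 - γ ^ 2) : ℝ) : ℂ) ^ 2 = 4 * (1 - (γ : ℂ) ^ 2) := by
    push_cast
    rw [mul_pow, ← Complex.ofReal_pow, Real.sq_sqrt hnonneg]
    push_cast
    ring
  refine ⟨by rw [bh3_det_shift]; ring, ?_, ?_⟩
  · rw [bh3_det_shift, hsq]; ring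
  · rw [bh3_det_shift]
    push_cast
    rw [neg_pow]
    push_cast [hsq] at *
    rw [show ((-1 : ℂ)) ^ 2 * (2 * (Real.sqrt (1 - γ ^ 2) : ℂ)) ^ 2 =
        (2 * (Real.sqrt (1 - γ ^ 2) : ℂ)) ^ 2 from by ring]
    rw [show ((2 : ℂ) * (Real.sqrt (1 - γ ^ 2) : ℂ)) ^ 2 = 4 * (1 - (γ : ℂ) ^ 2) from by
      have h' := hsq; push_cast at h' ⊢; linear_combination h']
    ring
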